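/- Let (e_j, f_j), j = 1, …, k, be pairwise orthogonal hyperbolic pairs and let v be a unit vector (Q v = 1) orthogonal to all e_j, f_j; set Σ₂ₖ₊₁ := i^k * ι v * ∏_{j=1}^k (1 − ι e_j * ι f_j). Then the twisted conjugation action u ↦ involute(Σ₂ₖ₊₁) * ι u * star(Σ₂ₖ₊₁) fixes ι u for every u in the ℂ-span of {v, e₁, f₁, …, e_k, f_k}, and sends ι u to −ι u for every vector u orthogonal to all of v, e₁, f₁, …, e_k, f_k. (Thus Σ₂ₖ₊₁ acts on V as −1 times the map that is −Id on the (2k+1)-dimensional block and Id on its complement.) -/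

import Mathlib

open CliffordAlgebra QuadraticMap

section SigmaOddAux

variable {V : Type*} [AddCommGroup V] [Module ℂ V] (Q : QuadraticForm ℂ V)

private lemma aux_anticomm {a b : V} (h : polar Q a b = 0) :
    ι Q a * ι Q b = -(ι Q b * ι Q a) := by
  have h2 := ι_mul_ι_add_swap (Q := Q) a b
  rw [h, map_zero] at h2
  exact eq_neg_of_add_eq_zero_left h2

private lemma aux_comm_pair {u a b : V} (h1 : polar Q u a = 0) (h2 : polar Q u b = 0) :
    Commute (ι Q u) (ι Q a * ι Q b) := by
  have ha := aux_anticomm Q h1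
  have hb := aux_anticomm Q h2
  show ι Q u * (ι Q a * ι Q b) = (ι Q a * ι Q b) * ι Q u
  calc ι Q u * (ι Q a * ι Q b) = (ι Q u * ι Q a) * ι Q b := (mul_assoc _ _ _).symm
    _ = -(ι Q a * ι Q u) * ι Q b := by rw [ha]
    _ = -(ι Q a * (ι Q u * ι Q b)) := by noncomm_ring
    _ = -(ι Q a * -(ι Q b * ι Q u)) := by rw [hb]
    _ = (ι Q a * ι Q b) * ι Q u := by noncomm_ring

/-- `F a b = 1 - ι a * ι b`. -/
private def auxF (a b : V) : CliffordAlgebra Q := 1 - ι Q a * ι Q b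

/-- `G a b = 1 - ι b * ι a`. -/
private def auxG (a b : V) : CliffordAlgebra Q := 1 - ι Q b * ι Q a

private lemma aux_commF {u a b : V} (h1 : polar Q u a = 0) (h2 : polar Q u b = 0) :
    Commute (ι Q u) (auxF Q a b) :=
  (Commute.one_right _).sub_right (aux_comm_pair Q h1 h2)

private lemma aux_commG {u a b : V} (h1 : polar Q u a = 0) (h2 : polar Q u b = 0) :
    Commute (ι Q u) (auxG Q a b) :=
  (Commute.one_right _).sub_right (aux_comm_pair Q h2 h1)

private lemma star_auxF (a b : V) : star (auxF Q a b) = auxG Q a b := by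
  simp only [auxF, auxG, star_sub, star_one, star_mul, star_ι, neg_mul_neg]

private lemma involute_auxF (a b : V) : involute (auxF Q a b) = auxF Q a b := by
  simp only [auxF, _root_.map_sub, _root_.map_one, _root_.map_mul, involute_ι, neg_mul_neg]

private lemma aux_FG {a b : V} (hb : Q b = 0) (hp : polar Q a b = 2) :
    auxF Q a b * auxG Q a b = -1 := by
  set x := ι Q a with hx'
  set y := ι Q b with hy'
  have hy : y * y = 0 := by rw [hy', ι_sq_scalar, hb, map_zero]
  have hxy : x * y + y * x = 2 := by
    have h := ι_mul_ι_add_swap (Q := Q) a b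
    rw [hp] at h
    rw [hx', hy', h, map_ofNat]
  calc auxF Q a b * auxG Q a b
      = 1 - (x * y + y * x) + x * (y * y) * x := by rw [auxF, auxG]; noncomm_ring
    _ = 1 - 2 + x * 0 * x := by rw [hxy, hy]
    _ = -1 := by rw [mul_zero, zero_mul, add_zero]; norm_num

private lemma aux_FxG {a b : V} (ha : Q a = 0) (hp : polar Q a b = 2) :
    auxF Q a b * ι Q a * auxG Q a b = ι Q a := by
  set x := ι Q a with hx'
  set y := ι Q b with hy'
  have hx : x * x = 0 := by rw [hx', ι_sq_scalar, ha, map_zero]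
  have hxy : x * y + y * x = 2 := by
    have h := ι_mul_ι_add_swap (Q := Q) a b
    rw [hp] at h
    rw [hx', hy', h, map_ofNat]
  have hyx : y * x = 2 - x * y := eq_sub_of_add_eq (by rw [add_comm]; exact hxy)
  have hxyx : x * y * x = 2 * x := by
    calc x * y * x = x * (2 - x * y) := by rw [mul_assoc, hyx]
      _ = 2 * x - x * x * y := by noncomm_ring
    rw [hx]
    noncomm_ring
  calc auxF Q a b * x * auxG Q a b
      = x - x * y * x - x * y * x + (x * y * x) * (y * x) := by rw [auxF, auxG]; noncomm_ring
    _ = x - 2 * x - 2 * x + (2 * x) * (y * x) := by rw [hxyx]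
    _ = x - 2 * x - 2 * x + 2 * (x * (y * x)) := by noncomm_ring
    _ = x - 2 * x - 2 * x + 2 * (2 * x) := by
        rw [show x * (y * x) = 2 * x from by rw [← mul_assoc]; exact hxyx]
    _ = x := by noncomm_ring

private lemma aux_FyG {a b : V} (hb : Q b = 0) :
    auxF Q a b * ι Q b * auxG Q a b = ι Q b := by
  set x := ι Q a with hx'
  set y := ι Q b with hy'
  have hy : y * y = 0 := by rw [hy', ι_sq_scalar, hb, map_zero]
  calc auxF Q a b * y * auxG Q a b
      = y - y * y * x - x * (y * y) + x * (y * y) * (y * x) := by rw [auxF, auxG]; noncomm_ring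
    _ = y - 0 * x - x * 0 + x * 0 * (y * x) := by rw [hy]
    _ = y := by noncomm_ring

/-- `F * ι u * G = -(ι u)` when `ι u` commutes with `G` and `F * G = -1`. -/
private lemma aux_conj_of_comm {F G : CliffordAlgebra Q} {u : V}
    (hc : Commute (ι Q u) G) (hFG : F * G = -1) :
    F * ι Q u * G = -(ι Q u) := by
  rw [mul_assoc, hc.eq, ← mul_assoc, hFG, neg_one_mul]

private lemma aux_sandwich {Fp G Pt SPt X Y Z : CliffordAlgebra Q} {c : ℂ}
    (h1 : Pt * X * SPt = c • Y) (h2 : Fp * Y * G = Z) :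
    (Fp * Pt) * X * (SPt * G) = c • Z := by
  calc (Fp * Pt) * X * (SPt * G) = Fp * (Pt * X * SPt) * G := by noncomm_ring
    _ = Fp * (c • Y) * G := by rw [h1]
    _ = c • (Fp * Y * G) := by rw [mul_smul_comm, smul_mul_assoc]
    _ = c • Z := by rw [h2]

/-- The product `∏ (1 - ι p.1 * ι p.2)` over a list of pairs. -/
private def auxP (l : List (V × V)) : CliffordAlgebra Q :=
  (l.map fun p => auxF Q p.1 p.2).prod

private lemma auxP_nil : auxP Q ([] : List (V × V)) = 1 := rfl

private lemma auxP_cons (p : V × V) (t : List (V × V)) :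
    auxP Q (p :: t) = auxF Q p.1 p.2 * auxP Q t := by
  simp [auxP]

private lemma involute_auxP (l : List (V × V)) : involute (auxP Q l) = auxP Q l := by
  induction l with
  | nil => simp [auxP_nil]
  | cons p t ih => rw [auxP_cons, map_mul, ih, involute_auxF]

private lemma star_auxP_cons (p : V × V) (t : List (V × V)) :
    star (auxP Q (p :: t)) = star (auxP Q t) * auxG Q p.1 p.2 := by
  rw [auxP_cons, star_mul, star_auxF]

private lemma aux_master (l : List (V × V)) :
    (∀ p ∈ l, Q p.1 = 0 ∧ Q p.2 = 0 ∧ polar Q p.1 p.2 = 2) →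
    l.Pairwise (fun p q => polar Q p.1 q.1 = 0 ∧ polar Q p.1 q.2 = 0 ∧
      polar Q p.2 q.1 = 0 ∧ polar Q p.2 q.2 = 0) →
    (auxP Q l * star (auxP Q l) = ((-1 : ℂ) ^ l.length) • 1 ∧
     (∀ u : V, (∀ p ∈ l, polar Q u p.1 = 0 ∧ polar Q u p.2 = 0) →
        auxP Q l * ι Q u * star (auxP Q l) = ((-1 : ℂ) ^ l.length) • ι Q u) ∧
     (∀ p ∈ l,
        auxP Q l * ι Q p.1 * star (auxP Q l) = -(((-1 : ℂ) ^ l.length) • ι Q p.1) ∧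
        auxP Q l * ι Q p.2 * star (auxP Q l) = -(((-1 : ℂ) ^ l.length) • ι Q p.2))) := by
  induction l with
  | nil =>
    intro _ _
    refine ⟨by simp [auxP_nil], fun u _ => by simp [auxP_nil], by simp⟩
  | cons p t ih =>
    intro hQ0 hpw
    obtain ⟨hQp1, hQp2, hpolp⟩ := hQ0 p List.mem_cons_self
    rw [List.pairwise_cons] at hpw
    obtain ⟨hhead, hpwt⟩ := hpw
    obtain ⟨IH1, IH2, IH3⟩ := ih (fun q hq => hQ0 q (List.mem_cons_of_mem _ hq)) hpwt
    set n := t.length with hn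
    have hlen : (p :: t).length = n + 1 := by simp [hn]
    have hsc : ∀ x : CliffordAlgebra Q,
        ((-1 : ℂ) ^ (n + 1)) • x = -(((-1 : ℂ) ^ n) • x) := by
      intro x
      rw [pow_succ, mul_smul, neg_smul, one_smul, smul_neg]
    have hFG : auxF Q p.1 p.2 * auxG Q p.1 p.2 = -1 := aux_FG Q hQp2 hpolp
    refine ⟨?_, ?_, ?_⟩
    · -- P * star P
      rw [hlen, star_auxP_cons, auxP_cons]
      have h2 : auxF Q p.1 p.2 * 1 * auxG Q p.1 p.2 = -1 := by rw [mul_one, hFG]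
      have h1 : auxP Q t * 1 * star (auxP Q t) = ((-1 : ℂ) ^ n) • 1 := by
        rw [mul_one]; exact IH1
      have := aux_sandwich Q h1 h2
      rw [mul_one] at this
      rw [this, hsc, smul_neg]
    · -- orthogonal vectors
      intro u hu
      obtain ⟨hu1, hu2⟩ := hu p List.mem_cons_self
      have hut : ∀ q ∈ t, polar Q u q.1 = 0 ∧ polar Q u q.2 = 0 :=
        fun q hq => hu q (List.mem_cons_of_mem _ hq)
      rw [hlen, star_auxP_cons, auxP_cons]
      have h2 : auxF Q p.1 p.2 * ι Q u * auxG Q p.1 p.2 = -(ι Q u) :=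
        aux_conj_of_comm Q (aux_commG Q hu1 hu2) hFG
      rw [aux_sandwich Q (IH2 u hut) h2, hsc, smul_neg]
    · -- the pairs themselves
      intro q hq
      rw [hlen, star_auxP_cons, auxP_cons]
      rcases List.mem_cons.mp hq with rfl | hqt
      · -- head
        have horth_t : ∀ r ∈ t, polar Q q.1 r.1 = 0 ∧ polar Q q.1 r.2 = 0 :=
          fun r hr => ⟨(hhead r hr).1, (hhead r hr).2.1⟩
        have horth_t2 : ∀ r ∈ t, polar Q q.2 r.1 = 0 ∧ polar Q q.2 r.2 = 0 :=
          fun r hr => ⟨(hhead r hr).2.2.1, (hhead r hr).2.2.2⟩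
        constructor
        · rw [aux_sandwich Q (IH2 q.1 horth_t) (aux_FxG Q hQp1 hpolp), hsc, neg_neg]
        · rw [aux_sandwich Q (IH2 q.2 horth_t2) (aux_FyG Q hQp2), hsc, neg_neg]
      · -- tail
        obtain ⟨hq1, hq2⟩ := IH3 q hqt
        have hrel := hhead q hqt
        have hcq1G : Commute (ι Q q.1) (auxG Q p.1 p.2) :=
          aux_commG Q (by rw [polar_comm]; exact hrel.1) (by rw [polar_comm]; exact hrel.2.2.1)
        have hcq2G : Commute (ι Q q.2) (auxG Q p.1 p.2) :=
          aux_commG Q (by rw [polar_comm]; exact hrel.2.1) (by rw [polar_comm]; exact hrel.2.2.2)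
        have hq1' : auxP Q t * ι Q q.1 * star (auxP Q t) = ((-1 : ℂ) ^ (n + 1)) • ι Q q.1 := by
          rw [hq1, hsc]
        have hq2' : auxP Q t * ι Q q.2 * star (auxP Q t) = ((-1 : ℂ) ^ (n + 1)) • ι Q q.2 := by
          rw [hq2, hsc]
        constructor
        · rw [aux_sandwich Q hq1' (aux_conj_of_comm Q hcq1G hFG), smul_neg]
        · rw [aux_sandwich Q hq2' (aux_conj_of_comm Q hcq2G hFG), smul_neg]

end SigmaOddAux

/-- Let `(e j, f j)`, `j = 1, …, k`, be pairwise orthogonal hyperbolic pairs and `v` a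
unit vector orthogonal to all of them; set
`Σ₂ₖ₊₁ = i^k • (ι v * ∏ j (1 - ι (e j) * ι (f j)))`.  The twisted conjugation
`u ↦ involute Σ₂ₖ₊₁ * ι u * star Σ₂ₖ₊₁` fixes `ι u` for every `u` in the `ℂ`-span of
`{v} ∪ {e j} ∪ {f j}`, and sends `ι u` to `-ι u` for every `u` orthogonal to all of
`v`, `e j`, `f j`. -/
theorem sigma_odd_action {V : Type*} [AddCommGroup V] [Module ℂ V]
    (Q : QuadraticForm ℂ V) (k : ℕ) (e f : Fin k → V) (v : V)
    (hQe : ∀ j, Q (e j) = 0) (hQf : ∀ j, Q (f j) = 0)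
    (hef : ∀ j, polar Q (e j) (f j) = 2)
    (horth : ∀ i j, i ≠ j →
      polar Q (e i) (e j) = 0 ∧ polar Q (e i) (f j) = 0 ∧ polar Q (f i) (f j) = 0)
    (hv : Q v = 1)
    (hve : ∀ j, polar Q v (e j) = 0) (hvf : ∀ j, polar Q v (f j) = 0)
    (S : CliffordAlgebra Q)
    (hS : S = (Complex.I ^ k) •
      (ι Q v * (List.ofFn (fun j : Fin k => 1 - ι Q (e j) * ι Q (f j))).prod)) :
    (∀ u ∈ Submodule.span ℂ ({v} ∪ Set.range e ∪ Set.range f),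
      involute S * ι Q u * star S = ι Q u) ∧
    (∀ u : V, polar Q u v = 0 → (∀ j, polar Q u (e j) = 0) →
      (∀ j, polar Q u (f j) = 0) →
      involute S * ι Q u * star S = -(ι Q u)) := by
  classical
  set l : List (V × V) := List.ofFn (fun j : Fin k => (e j, f j)) with hl
  have hP : (List.ofFn (fun j : Fin k => 1 - ι Q (e j) * ι Q (f j))).prod = auxP Q l := by
    simp [auxP, hl, List.map_ofFn, Function.comp_def, auxF]
  have hlen : l.length = k := by simp [hl]
  -- master lemma hypotheses
  have hQ0 : ∀ p ∈ l, Q p.1 = 0 ∧ Q p.2 = 0 ∧ polar Q p.1 p.2 = 2 := by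
    intro p hp
    rw [hl, List.mem_ofFn] at hp
    obtain ⟨j, rfl⟩ := hp
    exact ⟨hQe j, hQf j, hef j⟩
  have hpw : l.Pairwise (fun p q => polar Q p.1 q.1 = 0 ∧ polar Q p.1 q.2 = 0 ∧
      polar Q p.2 q.1 = 0 ∧ polar Q p.2 q.2 = 0) := by
    rw [hl, List.pairwise_ofFn]
    intro i j hij
    have h1 := horth i j (ne_of_lt hij)
    have h2 := horth j i (ne_of_gt hij)
    exact ⟨h1.1, h1.2.1, by rw [polar_comm]; exact h2.2.1, h1.2.2⟩
  obtain ⟨M1, M2, M3⟩ := aux_master Q l hQ0 hpw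
  rw [hlen] at M1 M2 M3
  -- basic facts
  have hvv : ι Q v * ι Q v = 1 := by rw [ι_sq_scalar, hv, map_one]
  have hvuv : ∀ u : V, polar Q v u = 0 → ι Q v * ι Q u * ι Q v = -(ι Q u) := by
    intro u h
    rw [aux_anticomm Q h, neg_mul, mul_assoc, hvv, mul_one]
  have hI : Complex.I ^ k * Complex.I ^ k = (-1 : ℂ) ^ k := by
    rw [← pow_add, ← two_mul, pow_mul, Complex.I_sq]
  have hneg1 : ((-1 : ℂ) ^ k) * ((-1 : ℂ) ^ k) = 1 := by
    rw [← pow_add, ← two_mul, pow_mul, neg_one_sq, one_pow]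
  have hinv : involute S = Complex.I ^ k • (-(ι Q v) * auxP Q l) := by
    rw [hS, hP, _root_.map_smul, _root_.map_mul, involute_ι, involute_auxP]
  have hstarS : star S = Complex.I ^ k • (star (auxP Q l) * -(ι Q v)) := by
    rw [hS, hP, star_def, _root_.map_smul, _root_.map_smul, ← star_def, star_mul, star_ι]
  have key : ∀ u : V, involute S * ι Q u * star S =
      ((-1 : ℂ) ^ k) • (ι Q v * (auxP Q l * ι Q u * star (auxP Q l)) * ι Q v) := by
    intro u
    rw [hinv, hstarS, smul_mul_assoc, smul_mul_assoc, mul_smul_comm, smul_smul, hI]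
    congr 1
    noncomm_ring
  constructor
  · -- span part
    set T : V →ₗ[ℂ] CliffordAlgebra Q :=
      (LinearMap.mulRight ℂ (star S)).comp
        ((LinearMap.mulLeft ℂ (involute S)).comp (ι Q)) with hT
    have hTapp : ∀ u : V, T u = involute S * ι Q u * star S := fun u => rfl
    have hgen : ({v} ∪ Set.range e ∪ Set.range f : Set V) ⊆
        ↑(LinearMap.eqLocus T (ι Q)) := by
      rintro u (hu | hu)
      · rcases hu with hu | hu
        · -- u = v
          rw [Set.mem_singleton_iff] at hu
          rw [SetLike.mem_coe, LinearMap.mem_eqLocus, hu, hTapp]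
          have hmv : auxP Q l * ι Q v * star (auxP Q l) = ((-1 : ℂ) ^ k) • ι Q v := by
            refine M2 v ?_
            intro p hp
            rw [hl, List.mem_ofFn] at hp
            obtain ⟨j, rfl⟩ := hp
            exact ⟨hve j, hvf j⟩
          have h2 : ι Q v * (((-1 : ℂ) ^ k) • ι Q v) * ι Q v = ((-1 : ℂ) ^ k) • ι Q v := by
            rw [mul_smul_comm, smul_mul_assoc, hvv, one_mul]
          rw [key v, hmv, h2, smul_smul, hneg1, one_smul]
        · -- u = e m
          obtain ⟨m, rfl⟩ := hu
          have hmem : (e m, f m) ∈ l := by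
            rw [hl, List.mem_ofFn]; exact ⟨m, rfl⟩
          have hme := (M3 (e m, f m) hmem).1
          have h2 : ι Q v * (-(((-1 : ℂ) ^ k) • ι Q (e m))) * ι Q v
              = ((-1 : ℂ) ^ k) • ι Q (e m) := by
            rw [mul_neg, neg_mul, mul_smul_comm, smul_mul_assoc, hvuv (e m) (hve m),
              smul_neg, neg_neg]
          rw [SetLike.mem_coe, LinearMap.mem_eqLocus, hTapp, key (e m), hme, h2,
            smul_smul, hneg1, one_smul]
      · -- u = f m
        obtain ⟨m, rfl⟩ := hu
        have hmem : (e m, f m) ∈ l := by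
          rw [hl, List.mem_ofFn]; exact ⟨m, rfl⟩
        have hmf := (M3 (e m, f m) hmem).2
        have h2 : ι Q v * (-(((-1 : ℂ) ^ k) • ι Q (f m))) * ι Q v
            = ((-1 : ℂ) ^ k) • ι Q (f m) := by
          rw [mul_neg, neg_mul, mul_smul_comm, smul_mul_assoc, hvuv (f m) (hvf m),
            smul_neg, neg_neg]
        rw [SetLike.mem_coe, LinearMap.mem_eqLocus, hTapp, key (f m), hmf, h2,
          smul_smul, hneg1, one_smul]
    intro u hu
    have hle : Submodule.span ℂ ({v} ∪ Set.range e ∪ Set.range f) ≤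
        LinearMap.eqLocus T (ι Q) := Submodule.span_le.mpr hgen
    have := hle hu
    rw [LinearMap.mem_eqLocus] at this
    rw [← hTapp, this]
  · -- orthogonal part
    intro u huv hue huf
    have hvu : polar Q v u = 0 := by rw [polar_comm]; exact huv
    have hmu : auxP Q l * ι Q u * star (auxP Q l) = ((-1 : ℂ) ^ k) • ι Q u := by
      refine M2 u ?_
      intro p hp
      rw [hl, List.mem_ofFn] at hp
      obtain ⟨j, rfl⟩ := hp
      exact ⟨hue j, huf j⟩
    have h2 : ι Q v * (((-1 : ℂ) ^ k) • ι Q u) * ι Q v = ((-1 : ℂ) ^ k) • (-(ι Q u)) := by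
      rw [mul_smul_comm, smul_mul_assoc, hvuv u hvu]
    rw [key u, hmu, h2, smul_smul, hneg1, one_smul]
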